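/- Let d, n ≥ 1, L, B > 0, ε > 0, let x₁,…,x_n ∈ ℝ^d satisfy ‖xᵢ‖₂ ≤ 2L, and let ỹ₁,…,ỹ_n ∈ {0,1} be arbitrary fixed labels. Then the debiased loss l̂ : ℝ^d → ℝ is differentiable, and for all θ, θ′ ∈ Θ_B, l̂(θ′) ≥ l̂(θ) + ⟨∇l̂(θ), θ′−θ⟩ + (γ·(2σ(ε)−1)/2)·Σ_{i=1}^n (xᵢᵀ(θ′−θ))², where γ = 1/(2 + e^{−2LB} + e^{2LB}); i.e., l̂ is γ(2σ(ε)−1)-strongly convex on Θ_B with respect to the semi-norm v ↦ √(Σᵢ (xᵢᵀv)²), for every privacy level ε > 0. -/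

import Mathlib

open MeasureTheory Real

/-- The sigmoid function `σ(z) = 1/(1+e^{−z})`. -/
noncomputable def sigmoid (z : ℝ) : ℝ := 1 / (1 + Real.exp (-z))

/-- The parameter set `Θ_B = {θ ∈ ℝ^d : ⟨1, θ⟩ = 0, ‖θ‖ ≤ B}`. -/
def Theta (d : ℕ) (B : ℝ) : Set (EuclideanSpace ℝ (Fin d)) :=
  {θ | (∑ j, θ j) = 0 ∧ ‖θ‖ ≤ B}

/-- `γ = 1/(2 + e^{−2LB} + e^{2LB})`. -/
noncomputable def gammaLB (L B : ℝ) : ℝ :=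
  1 / (2 + Real.exp (-(2*L*B)) + Real.exp (2*L*B))

/-- The debiased loss `l̂`, tailored to randomized response. -/
noncomputable def debiasedLoss (d n : ℕ) (ε : ℝ) (x : Fin n → EuclideanSpace ℝ (Fin d))
    (y : Fin n → Bool) (θ : EuclideanSpace ℝ (Fin d)) : ℝ :=
  -∑ i, (if y i then
      _root_.sigmoid ε * Real.log (_root_.sigmoid (inner ℝ (x i) θ))
        - (1 - _root_.sigmoid ε) * Real.log (1 - _root_.sigmoid (inner ℝ (x i) θ))
    else
      _root_.sigmoid ε * Real.log (1 - _root_.sigmoid (inner ℝ (x i) θ))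
        - (1 - _root_.sigmoid ε) * Real.log (_root_.sigmoid (inner ℝ (x i) θ)))

noncomputable def lg (u : ℝ) : ℝ := Real.log (1 + Real.exp (-u))
noncomputable def lgd (u : ℝ) : ℝ := -Real.exp (-u) / (1 + Real.exp (-u))
noncomputable def lgdd (u : ℝ) : ℝ := Real.exp (-u) / (1 + Real.exp (-u))^2

lemma one_add_exp_pos (u : ℝ) : 0 < 1 + Real.exp (-u) := by positivity

lemma hasDerivAt_inner_exp (u : ℝ) : HasDerivAt (fun t => 1 + Real.exp (-t)) (-Real.exp (-u)) u := by
  have h : HasDerivAt (fun t : ℝ => Real.exp (-t)) (Real.exp (-u) * (-1)) u :=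
    (Real.hasDerivAt_exp (-u)).comp u (hasDerivAt_neg u)
  simpa [mul_comm] using h.const_add 1

lemma hasDerivAt_lg (u : ℝ) : HasDerivAt lg (lgd u) u := by
  have h := (hasDerivAt_inner_exp u).log (ne_of_gt (one_add_exp_pos u))
  show HasDerivAt (fun t => Real.log (1 + Real.exp (-t))) (lgd u) u
  simpa [lgd, neg_div] using h

lemma hasDerivAt_lgd (u : ℝ) : HasDerivAt lgd (lgdd u) u := by
  have hnum : HasDerivAt (fun t : ℝ => -Real.exp (-t)) (Real.exp (-u)) u := by
    have h : HasDerivAt (fun t : ℝ => Real.exp (-t)) (Real.exp (-u) * (-1)) u :=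
      (Real.hasDerivAt_exp (-u)).comp u (hasDerivAt_neg u)
    simpa using h.fun_neg
  have h := hnum.div (hasDerivAt_inner_exp u) (ne_of_gt (one_add_exp_pos u))
  refine h.congr_deriv ?_
  rw [lgdd]
  field_simp
  ring

lemma lgdd_eq (t : ℝ) : lgdd t = 1 / (2 + Real.exp t + Real.exp (-t)) := by
  rw [lgdd]
  rw [div_eq_div_iff (by positivity) (by positivity)]
  have h1 : Real.exp t * Real.exp (-t) = 1 := by rw [← Real.exp_add]; simp
  ring_nf
  nlinarith [h1]

lemma lgdd_ge {s t : ℝ} (h : |t| ≤ s) :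
    1 / (2 + Real.exp (-s) + Real.exp s) ≤ lgdd t := by
  rw [lgdd_eq]
  have h1 : t ≤ s := (abs_le.mp h).2
  have h2 : -s ≤ t := (abs_le.mp h).1
  have e1 : Real.exp t ≤ Real.exp s := Real.exp_le_exp.mpr h1
  have e2 : Real.exp (-s) ≤ Real.exp t := Real.exp_le_exp.mpr h2
  have e3 : Real.exp t * Real.exp (-t) = 1 := by rw [← Real.exp_add]; simp
  have e4 : Real.exp s * Real.exp (-s) = 1 := by rw [← Real.exp_add]; simp
  have key : Real.exp t + Real.exp (-t) ≤ Real.exp s + Real.exp (-s) := by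
    have hp : (Real.exp t - Real.exp s) * (Real.exp t - Real.exp (-s)) ≤ 0 :=
      mul_nonpos_of_nonpos_of_nonneg (by linarith) (by linarith)
    have ht : 0 < Real.exp t := Real.exp_pos t
    nlinarith [hp, e3, e4, ht]
  apply one_div_le_one_div_of_le (by positivity) (by linarith)

lemma lg_strong {s u u' : ℝ} (hu : |u| ≤ s) (hu' : |u'| ≤ s) :
    lg u + lgd u * (u' - u) + (1 / (2 + Real.exp (-s) + Real.exp s)) / 2 * (u' - u)^2 ≤ lg u' := by
  set γ := 1 / (2 + Real.exp (-s) + Real.exp s) with hγ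
  -- φ monotone on Icc (-s) s
  have hphi : ∀ t : ℝ, HasDerivAt (fun t => lgd t - γ * t) (lgdd t - γ) t := fun t => by
    simpa using (hasDerivAt_lgd t).fun_sub ((hasDerivAt_id t).const_mul γ)
  have hmono : MonotoneOn (fun t => lgd t - γ * t) (Set.Icc (-s) s) := by
    apply monotoneOn_of_deriv_nonneg (convex_Icc _ _)
    · exact fun t _ => ((hphi t).continuousAt).continuousWithinAt
    · exact fun t _ => ((hphi t).differentiableAt).differentiableWithinAt
    · intro t ht
      rw [(hphi t).deriv]
      rw [interior_Icc] at ht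
      have := lgdd_ge (s := s) (t := t) (abs_le.mpr ⟨le_of_lt ht.1, le_of_lt ht.2⟩)
      linarith
  have hpsi : ∀ t : ℝ, HasDerivAt (fun t => lg t - lg u - lgd u * (t - u) - γ/2 * (t-u)^2)
      (lgd t - lgd u - γ * (t - u)) t := fun t => by
    have h1 : HasDerivAt (fun t : ℝ => (t - u)^2) (2*(t-u)) t := by
      simpa using ((hasDerivAt_id t).sub_const u).fun_pow 2
    have h2 := (((hasDerivAt_lg t).sub_const (lg u)).fun_sub
      (((hasDerivAt_id t).sub_const u).const_mul (lgd u))).fun_sub (h1.const_mul (γ/2))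
    refine h2.congr_deriv ?_
    ring
  have huI : u ∈ Set.Icc (-s) s := ⟨(abs_le.mp hu).1, (abs_le.mp hu).2⟩
  have hu'I : u' ∈ Set.Icc (-s) s := ⟨(abs_le.mp hu').1, (abs_le.mp hu').2⟩
  have hzero : lg u - lg u - lgd u * (u - u) - γ/2 * (u-u)^2 = 0 := by ring
  rcases le_total u u' with hc | hc
  · have hm : MonotoneOn (fun t => lg t - lg u - lgd u * (t - u) - γ/2 * (t-u)^2)
        (Set.Icc u u') := by
      apply monotoneOn_of_deriv_nonneg (convex_Icc _ _)
        (fun t _ => (hpsi t).continuousAt.continuousWithinAt)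
        (fun t _ => (hpsi t).differentiableAt.differentiableWithinAt)
      intro t ht
      rw [interior_Icc] at ht
      rw [(hpsi t).deriv]
      have htI : t ∈ Set.Icc (-s) s := ⟨le_trans huI.1 ht.1.le, le_trans ht.2.le hu'I.2⟩
      have := hmono huI htI ht.1.le
      simp only at this
      linarith
    have h0 := hm (Set.left_mem_Icc.mpr hc) (Set.right_mem_Icc.mpr hc) hc
    simp only at h0
    rw [hzero] at h0
    linarith
  · have hm : AntitoneOn (fun t => lg t - lg u - lgd u * (t - u) - γ/2 * (t-u)^2)
        (Set.Icc u' u) := by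
      apply antitoneOn_of_deriv_nonpos (convex_Icc _ _)
        (fun t _ => (hpsi t).continuousAt.continuousWithinAt)
        (fun t _ => (hpsi t).differentiableAt.differentiableWithinAt)
      intro t ht
      rw [interior_Icc] at ht
      rw [(hpsi t).deriv]
      have htI : t ∈ Set.Icc (-s) s := ⟨le_trans hu'I.1 ht.1.le, le_trans ht.2.le huI.2⟩
      have := hmono htI huI ht.2.le
      simp only at this
      linarith
    have h0 := hm (Set.left_mem_Icc.mpr hc) (Set.right_mem_Icc.mpr hc) hc
    simp only at h0
    rw [hzero] at h0
    linarith


lemma log_sigmoid (u : ℝ) : Real.log (_root_.sigmoid u) = -lg u := by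
  rw [_root_.sigmoid, lg, one_div, Real.log_inv]

lemma log_one_sub_sigmoid (u : ℝ) : Real.log (1 - _root_.sigmoid u) = -u - lg u := by
  have h : 1 - _root_.sigmoid u = Real.exp (-u) / (1 + Real.exp (-u)) := by
    rw [_root_.sigmoid]; field_simp; ring
  rw [h, Real.log_div (Real.exp_ne_zero _) (ne_of_gt (one_add_exp_pos u)), Real.log_exp, lg]

noncomputable def mu (ε : ℝ) (y : Bool) : ℝ := if y then -(1 - _root_.sigmoid ε) else _root_.sigmoid ε

lemma debiasedLoss_eq (d n : ℕ) (ε : ℝ) (x : Fin n → EuclideanSpace ℝ (Fin d)) (y : Fin n → Bool) :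
    debiasedLoss d n ε x y = fun θ => ∑ i,
      ((2 * _root_.sigmoid ε - 1) * lg (inner ℝ (x i) θ) + mu ε (y i) * inner ℝ (x i) θ) := by
  funext θ
  rw [debiasedLoss, ← Finset.sum_neg_distrib]
  apply Finset.sum_congr rfl
  intro i _
  cases hy : y i <;>
    simp only [hy, if_true, if_false, mu, Bool.false_eq_true, log_sigmoid, log_one_sub_sigmoid] <;>
    ring

lemma hasFDerivAt_loss (d n : ℕ) (ε : ℝ) (x : Fin n → EuclideanSpace ℝ (Fin d))
    (y : Fin n → Bool) (θ : EuclideanSpace ℝ (Fin d)) :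
    HasFDerivAt (debiasedLoss d n ε x y)
      (∑ i, ((2 * _root_.sigmoid ε - 1) * lgd (inner ℝ (x i) θ) + mu ε (y i)) • innerSL ℝ (x i)) θ := by
  rw [debiasedLoss_eq]
  apply HasFDerivAt.fun_sum
  intro i _
  have hl : HasFDerivAt (fun θ : EuclideanSpace ℝ (Fin d) => (inner ℝ (x i) θ : ℝ))
      (innerSL ℝ (x i)) θ := (innerSL ℝ (x i)).hasFDerivAt
  have h1 : HasFDerivAt (fun θ : EuclideanSpace ℝ (Fin d) => lg (inner ℝ (x i) θ))
      ((lgd (inner ℝ (x i) θ)) • innerSL ℝ (x i)) θ :=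
    (hasDerivAt_lg _).comp_hasFDerivAt θ hl
  have h2 := (h1.const_mul (2 * _root_.sigmoid ε - 1)).add (hl.const_mul (mu ε (y i)))
  refine h2.congr_fderiv ?_
  ext v
  simp [smul_smul]
  ring

/-- the debiased loss is differentiable and `γ(2σ(ε)−1)`-strongly convex
on `Θ_B` with respect to the semi-norm `v ↦ √(Σᵢ(xᵢᵀv)²)`, for every `ε > 0`. -/
theorem debiasedLoss_strongly_convex
    (d n : ℕ) (L B ε : ℝ) (x : Fin n → EuclideanSpace ℝ (Fin d)) (y : Fin n → Bool)
    (hd : 1 ≤ d) (hn : 1 ≤ n) (hL : 0 < L) (hB : 0 < B) (hε : 0 < ε)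
    (hx : ∀ i, ‖x i‖ ≤ 2 * L) :
    Differentiable ℝ (debiasedLoss d n ε x y) ∧
    ∀ θ ∈ Theta d B, ∀ θ' ∈ Theta d B,
      debiasedLoss d n ε x y θ
          + (inner ℝ (gradient (debiasedLoss d n ε x y) θ) (θ' - θ) : ℝ)
          + (gammaLB L B * (2 * _root_.sigmoid ε - 1) / 2) *
              ∑ i, (inner ℝ (x i) (θ' - θ) : ℝ)^2
        ≤ debiasedLoss d n ε x y θ' := by
  refine ⟨fun θ => (hasFDerivAt_loss d n ε x y θ).differentiableAt, ?_⟩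
  intro θ hθ θ' hθ'
  have hcpos : 0 ≤ 2 * _root_.sigmoid ε - 1 := by
    have h1 : Real.exp (-ε) ≤ 1 := Real.exp_le_one_iff.mpr (by linarith)
    have h2 : (1:ℝ)/2 ≤ _root_.sigmoid ε := by
      rw [_root_.sigmoid, div_le_div_iff₀ (by norm_num) (one_add_exp_pos ε)]
      linarith
    linarith
  have hgrad : (inner ℝ (gradient (debiasedLoss d n ε x y) θ) (θ' - θ) : ℝ)
      = ∑ i, ((2 * _root_.sigmoid ε - 1) * lgd (inner ℝ (x i) θ) + mu ε (y i))
          * (inner ℝ (x i) (θ' - θ) : ℝ) := by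
    rw [gradient, InnerProductSpace.toDual_symm_apply, (hasFDerivAt_loss d n ε x y θ).fderiv]
    simp [ContinuousLinearMap.sum_apply, smul_eq_mul]
  rw [hgrad, debiasedLoss_eq]
  simp only
  rw [Finset.mul_sum, ← Finset.sum_add_distrib, ← Finset.sum_add_distrib]
  apply Finset.sum_le_sum
  intro i _
  have hw : (inner ℝ (x i) (θ' - θ) : ℝ) = inner ℝ (x i) θ' - inner ℝ (x i) θ :=
    inner_sub_right _ _ _
  have hbound : ∀ ζ : EuclideanSpace ℝ (Fin d), ‖ζ‖ ≤ B → |(inner ℝ (x i) ζ : ℝ)| ≤ 2*L*B := by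
    intro ζ hζ
    calc |(inner ℝ (x i) ζ : ℝ)| ≤ ‖x i‖ * ‖ζ‖ := abs_real_inner_le_norm _ _
      _ ≤ (2*L) * B := mul_le_mul (hx i) hζ (norm_nonneg _) (by positivity)
  have hkey := lg_strong (s := 2*L*B) (hbound θ hθ.2) (hbound θ' hθ'.2)
  rw [hw, gammaLB]
  nlinarith [mul_le_mul_of_nonneg_left hkey hcpos]
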